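/- Fix K ≥ 1, V > 0, B_tot ∈ ℝ, weights w_1, …, w_K > 0 and estimated weights ŵ_1, …, ŵ_K > 0. Let B* and B̂* be the water-filling allocations computed from w and from ŵ respectively, and let ŵ_g = (∏_j ŵ_j)^{1/K}. Then F(B̂*) = (ŵ_g · 2^{−2 B_tot/(K V)} / K²) · Σ_{i=1}^K (w_i/ŵ_i), and consequently F(B̂*)/F(B*) = (1/K) Σ_{i=1}^K (w_i/ŵ_i)·(ŵ_g/w̄_g). -/

import Mathlib

open Finset

/-- Plug-in objective identity: with `B̂*` the water-filling allocation computed from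
estimated weights `ŵ` and `F` evaluated with the true weights `w`,
`F(B̂*) = (ŵ_g · 2^{-2B_tot/(KV)}/K²) Σ_i w_i/ŵ_i` and
`F(B̂*)/F(B*) = (1/K) Σ_i (w_i/ŵ_i)(ŵ_g/w̄_g)`. -/
theorem plugin_allocation_objective_identity (K : ℕ) (hK : 1 ≤ K)
    (V : ℝ) (hV : 0 < V) (Btot : ℝ)
    (w what : Fin K → ℝ) (hw : ∀ i, 0 < w i) (hwhat : ∀ i, 0 < what i)
    (wg whatg : ℝ)
    (hwg : wg = (∏ j, w j) ^ ((K : ℝ)⁻¹))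
    (hwhatg : whatg = (∏ j, what j) ^ ((K : ℝ)⁻¹))
    (Bstar Bhat : Fin K → ℝ)
    (hBstar : ∀ i, Bstar i = Btot / K + (V / 2) * Real.logb 2 (w i / wg))
    (hBhat : ∀ i, Bhat i = Btot / K + (V / 2) * Real.logb 2 (what i / whatg))
    (F : (Fin K → ℝ) → ℝ)
    (hF : ∀ Bv : Fin K → ℝ,
      F Bv = (1 / (K : ℝ) ^ 2) * ∑ i, w i * (2 : ℝ) ^ (-(2 * Bv i) / V)) :
    F Bhat = (whatg * (2 : ℝ) ^ (-(2 * Btot) / (K * V)) / (K : ℝ) ^ 2) *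
        ∑ i, w i / what i ∧
    F Bhat / F Bstar = (1 / (K : ℝ)) * ∑ i, (w i / what i) * (whatg / wg) := by
  have hK0 : (0:ℝ) < K := by exact_mod_cast hK
  have hwg0 : 0 < wg := by
    rw [hwg]; exact Real.rpow_pos_of_pos (Finset.prod_pos (fun i _ => hw i)) _
  have hwhatg0 : 0 < whatg := by
    rw [hwhatg]; exact Real.rpow_pos_of_pos (Finset.prod_pos (fun i _ => hwhat i)) _
  set c := (2:ℝ) ^ (-(2 * Btot) / (K * V)) with hc
  have hc0 : 0 < c := Real.rpow_pos_of_pos two_pos _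
  have key : ∀ (a g : ℝ), 0 < a → 0 < g →
      (2:ℝ) ^ (-(2 * (Btot / K + (V/2) * Real.logb 2 (a/g))) / V)
      = c * (g / a) := by
    intro a g ha hg
    have h1 : -(2 * (Btot / K + (V/2) * Real.logb 2 (a/g))) / V
        = -(2*Btot)/(K*V) + (- Real.logb 2 (a/g)) := by
      field_simp; ring
    rw [h1, Real.rpow_add two_pos, hc, Real.rpow_neg (le_of_lt two_pos),
      Real.rpow_logb two_pos (by norm_num) (div_pos ha hg), inv_div]
  have hFhat : F Bhat = whatg * c / (K:ℝ)^2 * ∑ i, w i / what i := by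
    rw [hF]
    have h2 : ∀ i ∈ Finset.univ, w i * (2:ℝ) ^ (-(2 * Bhat i) / V)
        = whatg * c * (w i / what i) := by
      intro i _
      rw [hBhat i, key (what i) whatg (hwhat i) hwhatg0]; ring
    rw [Finset.sum_congr rfl h2, ← Finset.mul_sum]
    ring
  have hFstar : F Bstar = wg * c / K := by
    rw [hF]
    have h2 : ∀ i ∈ Finset.univ, w i * (2:ℝ) ^ (-(2 * Bstar i) / V)
        = wg * c := by
      intro i _
      rw [hBstar i, key (w i) wg (hw i) hwg0]
      field_simp [(hw i).ne', mul_comm]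
    rw [Finset.sum_congr rfl h2, Finset.sum_const, Finset.card_univ, Fintype.card_fin]
    field_simp
    ring
  refine ⟨hFhat, ?_⟩
  rw [hFhat, hFstar]
  conv_rhs => rw [show (∑ i, (w i / what i) * (whatg / wg))
      = (∑ i, w i / what i) * (whatg / wg) from (Finset.sum_mul ..).symm]
  field_simp
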